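/- For every x ∈ 𝔲_{13} and every y ∈ 𝔲_{24}, the element x ∧ y lies in Im(d3). -/

import Mathlib

set_option maxHeartbeats 1000000
set_option synthInstance.maxHeartbeats 400000

attribute [local instance 100] LieRing.ofAssociativeRing


/-- Index type with four consecutive blocks of sizes `n 0, n 1, n 2, n 3`
(corresponding to the partition `I1 ⊔ I2 ⊔ I3 ⊔ I4` of `{1, …, N}`). -/
abbrev BIdx (n : Fin 4 → ℕ) := Σ a : Fin 4, Fin (n a)

/-- The Lie algebra `𝔲` of strictly block upper triangular matrices. -/
def uLie (n : Fin 4 → ℕ) (K : Type*) [Field K] :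
    LieSubalgebra K (Matrix (BIdx n) (BIdx n) K) where
  carrier := {M | ∀ (a b : Fin 4) (i : Fin (n a)) (j : Fin (n b)), b ≤ a → M ⟨a, i⟩ ⟨b, j⟩ = 0}
  add_mem' := by
    intro x y hx hy a b i j h
    simp [Matrix.add_apply, hx a b i j h, hy a b i j h]
  zero_mem' := by intro a b i j h; simp
  smul_mem' := by
    intro c x hx a b i j h
    simp [Matrix.smul_apply, hx a b i j h]
  lie_mem' := by
    intro x y hx hy a b i j h
    have key : ∀ u v : Matrix (BIdx n) (BIdx n) K,
        (∀ (a b : Fin 4) (i : Fin (n a)) (j : Fin (n b)), b ≤ a → u ⟨a, i⟩ ⟨b, j⟩ = 0) →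
        (∀ (a b : Fin 4) (i : Fin (n a)) (j : Fin (n b)), b ≤ a → v ⟨a, i⟩ ⟨b, j⟩ = 0) →
        (u * v) ⟨a, i⟩ ⟨b, j⟩ = 0 := by
      intro u v hu hv
      rw [Matrix.mul_apply]
      apply Finset.sum_eq_zero
      rintro ⟨c, kk⟩ -
      by_cases hc : c ≤ a
      · rw [hu a c i kk hc, zero_mul]
      · rw [hv c b kk j (h.trans (le_of_not_ge hc)), mul_zero]
    rw [Ring.lie_def, Matrix.sub_apply, key x y hx hy, key y x hy hx, sub_zero]

/-- The type of elements of `𝔲`. -/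
abbrev UU (n : Fin 4 → ℕ) (K : Type*) [Field K] := ↥(uLie n K)

/-- `x ∧ y`, as an element of the second exterior power `⋀[K]^2 𝔲`. -/
noncomputable def wedge {n : Fin 4 → ℕ} {K : Type*} [Field K] (x y : UU n K) :
    ↥(⋀[K]^2 (UU n K)) :=
  ⟨ExteriorAlgebra.ιMulti K 2 ![x, y], ExteriorAlgebra.ιMulti_range K 2 ⟨![x, y], rfl⟩⟩

/-- `x` is supported on the `(a, b)` block. -/
def inBlock {n : Fin 4 → ℕ} {K : Type*} [Field K] (a b : Fin 4) (x : UU n K) : Prop :=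
  ∀ (c d : Fin 4) (i : Fin (n c)) (j : Fin (n d)), ¬(c = a ∧ d = b) →
    (x : Matrix (BIdx n) (BIdx n) K) ⟨c, i⟩ ⟨d, j⟩ = 0

/-- The image of the Chevalley–Eilenberg differential `d3 : Λ³𝔲 → Λ²𝔲`: the span of all
`z ∧ [x,y] + y ∧ [z,x] + x ∧ [y,z]`. -/
noncomputable def Imd3 (n : Fin 4 → ℕ) (K : Type*) [Field K] :
    Submodule K ↥(⋀[K]^2 (UU n K)) :=
  Submodule.span K
    {w | ∃ x y z : UU n K, w = wedge z ⁅x, y⁆ + wedge y ⁅z, x⁆ + wedge x ⁅y, z⁆}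


section Aux

variable {n : Fin 4 → ℕ} {K : Type*} [Field K]

lemma update0 (x y z : UU n K) : Function.update ![x, y] 0 z = ![z, y] := by
  funext i; fin_cases i <;> simp [Function.update]

lemma update1 (x y z : UU n K) : Function.update ![x, y] 1 z = ![x, z] := by
  funext i; fin_cases i <;> simp [Function.update]

lemma wedge_add_left (x x' y : UU n K) : wedge (x + x') y = wedge x y + wedge x' y := by
  apply Subtype.ext
  show ExteriorAlgebra.ιMulti K 2 ![x + x', y] = _
  rw [← update0 x y (x + x'), AlternatingMap.map_update_add, update0, update0]
  rfl

/-- wedge as a linear map in the second variable. -/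
noncomputable def W2 (x : UU n K) : UU n K →ₗ[K] ↥(⋀[K]^2 (UU n K)) where
  toFun y := wedge x y
  map_add' y y' := by
    apply Subtype.ext
    show ExteriorAlgebra.ιMulti K 2 ![x, y + y'] = _
    rw [← update1 x y (y + y'), AlternatingMap.map_update_add, update1, update1]
    rfl
  map_smul' c y := by
    apply Subtype.ext
    show ExteriorAlgebra.ιMulti K 2 ![x, c • y] = _
    rw [← update1 x y (c • y), AlternatingMap.map_update_smul, update1]
    rfl

variable (K) in
/-- elementary matrix E_{(1,k),(2,m)}. -/
def sE (k : Fin (n 1)) (m : Fin (n 2)) : UU n K :=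
  ⟨Matrix.of fun p q => if p = (⟨1, k⟩ : BIdx n) ∧ q = (⟨2, m⟩ : BIdx n) then 1 else 0, by
    intro a b i j h
    simp only [Matrix.of_apply, ite_eq_right_iff, and_imp]
    intro hp hq
    obtain rfl : a = 1 := congrArg Sigma.fst hp
    obtain rfl : b = 2 := congrArg Sigma.fst hq
    exact absurd h (by decide)⟩

/-- row k of y, placed on row (2,m). -/
def tE (y : UU n K) (hy : inBlock 1 3 y) (k : Fin (n 1)) (m : Fin (n 2)) : UU n K :=
  ⟨Matrix.of fun p q => if p = (⟨2, m⟩ : BIdx n) then (y : Matrix (BIdx n) (BIdx n) K) ⟨1, k⟩ q else 0, by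
    intro a b i j h
    simp only [Matrix.of_apply]
    split
    · next hp =>
      obtain rfl : a = 2 := congrArg Sigma.fst hp
      exact hy 1 b k j (by rintro ⟨-, rfl⟩; exact absurd h (by decide))
    · rfl⟩

/-- row k of y, as element of UU. -/
def ykE (y : UU n K) (k : Fin (n 1)) : UU n K :=
  ⟨Matrix.of fun p q => if p = (⟨1, k⟩ : BIdx n) then (y : Matrix (BIdx n) (BIdx n) K) p q else 0, by
    intro a b i j h
    simp only [Matrix.of_apply]
    split
    · exact y.2 a b i j h
    · rfl⟩

/-- column m of x. -/
def xcol (x : UU n K) (m : Fin (n 2)) : UU n K :=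
  ⟨Matrix.of fun p q => if q = (⟨2, m⟩ : BIdx n) then (x : Matrix (BIdx n) (BIdx n) K) p q else 0, by
    intro a b i j h
    simp only [Matrix.of_apply]
    split
    · exact x.2 a b i j h
    · rfl⟩

/-- x with column m removed. -/
def xrest (x : UU n K) (m : Fin (n 2)) : UU n K :=
  ⟨Matrix.of fun p q => if q = (⟨2, m⟩ : BIdx n) then 0 else (x : Matrix (BIdx n) (BIdx n) K) p q, by
    intro a b i j h
    simp only [Matrix.of_apply]
    split
    · rfl
    · exact x.2 a b i j h⟩

lemma x_split (x : UU n K) (m : Fin (n 2)) : x = xrest x m + xcol x m := by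
  apply Subtype.ext
  ext p q
  show _ = (_ + _ : Matrix (BIdx n) (BIdx n) K) p q
  rw [Matrix.add_apply]
  simp only [xrest, xcol, Matrix.of_apply]
  split <;> simp

lemma inBlock_xcol (x : UU n K) (hx : inBlock 0 2 x) (m : Fin (n 2)) :
    inBlock 0 2 (xcol x m) := by
  intro c d i j h
  simp only [xcol, Matrix.of_apply]
  split
  · exact hx c d i j h
  · rfl

lemma inBlock_xrest (x : UU n K) (hx : inBlock 0 2 x) (m : Fin (n 2)) :
    inBlock 0 2 (xrest x m) := by
  intro c d i j h
  simp only [xrest, Matrix.of_apply]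
  split
  · rfl
  · exact hx c d i j h

lemma lie_x_s (x' : UU n K) (hx' : inBlock 0 2 x') (k : Fin (n 1)) (m : Fin (n 2)) :
    ⁅x', sE K k m⁆ = 0 := by
  apply Subtype.ext
  show ⁅(x' : Matrix (BIdx n) (BIdx n) K), ((sE K k m : UU n K) : Matrix (BIdx n) (BIdx n) K)⁆ = 0
  rw [Ring.lie_def]
  have h1 : (x' : Matrix (BIdx n) (BIdx n) K) * (sE K k m : UU n K) = 0 := by
    ext p q
    rw [Matrix.mul_apply, Matrix.zero_apply]
    apply Finset.sum_eq_zero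
    rintro ⟨c, r⟩ -
    simp only [sE, Matrix.of_apply]
    split
    · next h =>
      obtain rfl : c = 1 := congrArg Sigma.fst h.1
      rcases p with ⟨pa, pi⟩
      rw [hx' pa 1 pi r (by rintro ⟨-, hcon⟩; exact absurd hcon (by decide)), zero_mul]
    · rw [mul_zero]
  have h2 : ((sE K k m : UU n K) : Matrix (BIdx n) (BIdx n) K) * x' = 0 := by
    ext p q
    rw [Matrix.mul_apply, Matrix.zero_apply]
    apply Finset.sum_eq_zero
    rintro ⟨c, r⟩ -
    simp only [sE, Matrix.of_apply]
    split
    · next h =>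
      obtain rfl : c = 2 := congrArg Sigma.fst h.2
      rcases q with ⟨qa, qi⟩
      rw [hx' 2 qa r qi (by rintro ⟨hcon, -⟩; exact absurd hcon (by decide)), mul_zero]
    · rw [zero_mul]
  rw [h1, h2, sub_zero]

lemma lie_t_x (x' y : UU n K) (hx' : inBlock 0 2 x') (hy : inBlock 1 3 y)
    (k : Fin (n 1)) (m : Fin (n 2))
    (hcol : ∀ p, (x' : Matrix (BIdx n) (BIdx n) K) p ⟨2, m⟩ = 0) :
    ⁅tE y hy k m, x'⁆ = 0 := by
  apply Subtype.ext
  show ⁅((tE y hy k m : UU n K) : Matrix (BIdx n) (BIdx n) K), (x' : Matrix (BIdx n) (BIdx n) K)⁆ = 0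
  rw [Ring.lie_def]
  have h1 : ((tE y hy k m : UU n K) : Matrix (BIdx n) (BIdx n) K) * x' = 0 := by
    ext p q
    rw [Matrix.mul_apply, Matrix.zero_apply]
    apply Finset.sum_eq_zero
    rintro ⟨c, r⟩ -
    simp only [tE, Matrix.of_apply]
    split
    · rcases q with ⟨qa, qi⟩
      by_cases hc : c = 3
      · subst hc
        rw [hx' 3 qa r qi (by rintro ⟨hcon, -⟩; exact absurd hcon (by decide)), mul_zero]
      · rw [hy 1 c k r (by rintro ⟨-, hcon⟩; exact hc hcon), zero_mul]
    · rw [zero_mul]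
  have h2 : (x' : Matrix (BIdx n) (BIdx n) K) * (tE y hy k m : UU n K) = 0 := by
    ext p q
    rw [Matrix.mul_apply, Matrix.zero_apply]
    apply Finset.sum_eq_zero
    rintro ⟨c, r⟩ -
    simp only [tE, Matrix.of_apply]
    split
    · next h => rw [h, hcol p, zero_mul]
    · rw [mul_zero]
  rw [h1, h2, sub_zero]

lemma lie_s_t (y : UU n K) (hy : inBlock 1 3 y) (k : Fin (n 1)) (m : Fin (n 2)) :
    ⁅sE K k m, tE y hy k m⁆ = ykE y k := by
  apply Subtype.ext
  show ⁅((sE K k m : UU n K) : Matrix (BIdx n) (BIdx n) K),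
      ((tE y hy k m : UU n K) : Matrix (BIdx n) (BIdx n) K)⁆ = _
  rw [Ring.lie_def]
  have h2 : ((tE y hy k m : UU n K) : Matrix (BIdx n) (BIdx n) K) * (sE K k m : UU n K) = 0 := by
    ext p q
    rw [Matrix.mul_apply, Matrix.zero_apply]
    apply Finset.sum_eq_zero
    rintro ⟨c, r⟩ -
    simp only [tE, sE, Matrix.of_apply]
    split
    · split
      · next h1 h2 =>
        obtain rfl : c = 1 := congrArg Sigma.fst h2.1
        rw [y.2 1 1 k r le_rfl, zero_mul]
      · rw [mul_zero]
    · rw [zero_mul]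
  rw [h2, sub_zero]
  ext p q
  rw [Matrix.mul_apply]
  rw [Finset.sum_eq_single (⟨2, m⟩ : BIdx n)]
  · simp only [sE, tE, ykE, Matrix.of_apply, and_true, if_pos rfl]
    split
    · next h => rw [one_mul, h]; simp
    · rw [zero_mul]
  · intro c _ hc
    simp only [sE, Matrix.of_apply, hc, and_false, if_false, zero_mul]
  · intro h; exact absurd (Finset.mem_univ _) h

lemma yk_sum (y : UU n K) (hy : inBlock 1 3 y) : ∑ k : Fin (n 1), ykE y k = y := by
  apply Subtype.ext
  push_cast [AddSubmonoidClass.coe_finset_sum]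
  ext p q
  rw [Matrix.sum_apply]
  rcases p with ⟨pa, pi⟩
  rcases q with ⟨qa, qi⟩
  by_cases hp : pa = 1
  · subst hp
    rw [Finset.sum_eq_single pi]
    · simp [ykE]
    · intro k _ hk
      simp only [ykE, Matrix.of_apply]
      apply if_neg
      intro hcon
      injection hcon with hc1 hc2
      exact hk hc2.symm
    · intro h; exact absurd (Finset.mem_univ _) h
  · have hz : ∀ k ∈ Finset.univ, ((ykE y k : UU n K) : Matrix (BIdx n) (BIdx n) K) ⟨pa, pi⟩ ⟨qa, qi⟩ = 0 := by
      intro k _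
      simp only [ykE, Matrix.of_apply]
      apply if_neg
      intro hcon
      exact hp (congrArg Sigma.fst hcon)
    rw [Finset.sum_eq_zero hz]
    exact (hy pa qa pi qi (by rintro ⟨hcon, -⟩; exact hp hcon)).symm

end Aux

/-- For every `x ∈ 𝔲_{13}` (block `(0,2)`) and every `y ∈ 𝔲_{24}` (block `(1,3)`),
the element `x ∧ y` lies in `Im(d3)`. -/
theorem stmt_15 (n : Fin 4 → ℕ) (h0 : 1 ≤ n 0) (h1 : 3 ≤ n 1) (h2 : 3 ≤ n 2)
    (h3 : 1 ≤ n 3) (K : Type*) [Field K] :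
    ∀ x y : UU n K, inBlock 0 2 x → inBlock 1 3 y → wedge x y ∈ Imd3 n K := by
  intro x y hx hy
  have key : ∀ (x' : UU n K), inBlock 0 2 x' → ∀ m : Fin (n 2),
      (∀ p, (x' : Matrix (BIdx n) (BIdx n) K) p ⟨2, m⟩ = 0) → wedge x' y ∈ Imd3 n K := by
    intro x' hx' m hcol
    have hsum : wedge x' y = ∑ k : Fin (n 1), wedge x' (ykE y k) := by
      conv_lhs => rw [show wedge x' y = W2 x' y from rfl, ← yk_sum y hy]
      rw [map_sum]
      rfl
    rw [hsum]
    apply Submodule.sum_mem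
    intro k _
    apply Submodule.subset_span
    refine ⟨sE K k m, tE y hy k m, x', ?_⟩
    rw [lie_s_t y hy k m, lie_x_s x' hx' k m, lie_t_x x' y hx' hy k m hcol]
    have z1 : wedge (tE y hy k m) (0 : UU n K) = 0 := (W2 (tE y hy k m)).map_zero
    have z2 : wedge (sE K k m) (0 : UU n K) = 0 := (W2 (sE K k m)).map_zero
    rw [z1, z2, add_zero, add_zero]
  rw [x_split x ⟨0, by omega⟩, wedge_add_left]
  refine Submodule.add_mem _ ?_ ?_
  · refine key _ (inBlock_xrest x hx _) ⟨0, by omega⟩ ?_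
    intro p
    simp [xrest]
  · refine key _ (inBlock_xcol x hx _) ⟨1, by omega⟩ ?_
    intro p
    simp only [xcol, Matrix.of_apply]
    apply if_neg
    intro hcon
    injection hcon with hc1 hc2
    exact absurd (congrArg Fin.val hc2) (by norm_num)
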